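/- arXiv:1707.03379 — 2 statements merged into one kernel-verified Lean document; each statement's English description precedes it below -/
import Mathlib

section
/- For every positive integer n, the denominator of the Bernoulli number B_{2n} (written as a rational number in lowest terms) is divisible by 6. -/
open Finset

lemma bern_identity (p m : ℕ) :
    (p : ℚ) * bernoulli m = (∑ k ∈ range p, (k : ℚ) ^ m)
      - ∑ i ∈ range m, (m.choose i : ℚ) * bernoulli i * (p : ℚ) ^ (m + 1 - i)
          / ((m + 1 - i : ℕ) : ℚ) := by
  have h := sum_range_pow p m
  rw [Finset.sum_range_succ] at h
  have hm1 : ((m : ℚ) + 1) ≠ 0 := by positivity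
  have hlast : bernoulli m * ((m + 1).choose m : ℚ) * (p : ℚ) ^ (m + 1 - m) / (m + 1)
      = (p : ℚ) * bernoulli m := by
    rw [Nat.choose_succ_self_right, Nat.add_sub_cancel_left]
    push_cast
    field_simp
  rw [hlast] at h
  have hrest : ∀ i ∈ range m,
      bernoulli i * (((m + 1).choose i : ℕ) : ℚ) * (p : ℚ) ^ (m + 1 - i) / (m + 1)
      = (m.choose i : ℚ) * bernoulli i * (p : ℚ) ^ (m + 1 - i) / ((m + 1 - i : ℕ) : ℚ) := by
    intro i hi
    rw [mem_range] at hi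
    have key : (m.choose i : ℚ) * (m + 1) = ((m + 1).choose i : ℚ) * ((m + 1 - i : ℕ) : ℚ) := by
      exact_mod_cast congrArg (Nat.cast (R := ℚ)) (Nat.choose_mul_succ_eq m i)
    have h2 : ((m + 1 - i : ℕ) : ℚ) ≠ 0 := by
      have : 0 < m + 1 - i := by omega
      exact_mod_cast this.ne'
    rw [div_eq_div_iff hm1 h2]
    linear_combination -(bernoulli i * (p : ℚ) ^ (m + 1 - i)) * key
  rw [Finset.sum_congr rfl hrest] at h
  linarith [h]

lemma two_pow_aux : ∀ j, 3 ≤ j → j < 2 ^ (j - 1) := by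
  intro j hj
  induction j with
  | zero => omega
  | succ k ih =>
    rcases Nat.lt_or_ge k 3 with hk | hk
    · interval_cases k <;> simp <;> omega
    · have h1 := ih (by omega)
      have : k + 1 - 1 = (k - 1) + 1 := by omega
      rw [this, pow_succ]
      omega

lemma padicValNat_le_sub_one (p j : ℕ) (hp : 1 < p) (hj : 1 ≤ j) :
    padicValNat p j ≤ j - 1 := by
  by_contra h
  push_neg at h
  have hd : p ^ padicValNat p j ∣ j := pow_padicValNat_dvd
  have h1 : p ^ padicValNat p j ≤ j := Nat.le_of_dvd (by omega) hd
  have h2 : j < p ^ j := Nat.lt_pow_self hp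
  have h3 : p ^ j ≤ p ^ padicValNat p j := Nat.pow_le_pow_right (by omega) (by omega)
  omega

lemma padicValNat_le_sub_two (p j : ℕ) (hp : 1 < p) (hj : 3 ≤ j) :
    padicValNat p j ≤ j - 2 := by
  by_contra h
  push_neg at h
  have hd : p ^ padicValNat p j ∣ j := pow_padicValNat_dvd
  have h1 : p ^ padicValNat p j ≤ j := Nat.le_of_dvd (by omega) hd
  have h2 : j < 2 ^ (j - 1) := two_pow_aux j hj
  have h4 : 2 ^ (j-1) ≤ p ^ (j-1) := Nat.pow_le_pow_left hp (j-1)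
  have h3 : p ^ (j - 1) ≤ p ^ padicValNat p j := Nat.pow_le_pow_right (by omega) (by omega)
  omega

lemma padicNorm_pow_div (p : ℕ) [hp : Fact p.Prime] (j : ℕ) (hj : 1 ≤ j) :
    padicNorm p ((p : ℚ) ^ j / j) = (p : ℚ) ^ (-(j : ℤ) + (padicValNat p j : ℤ)) := by
  have hp1 : (1 : ℚ) < p := by exact_mod_cast hp.out.one_lt
  have hjq : ((j : ℚ)) ≠ 0 := by positivity
  rw [padicNorm.div]
  have h1 : ∀ i : ℕ, padicNorm p ((p : ℚ) ^ i) = (p : ℚ) ^ (-(i : ℤ)) := by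
    intro i
    induction i with
    | zero => simp
    | succ k ih =>
      rw [pow_succ, padicNorm.mul, ih, padicNorm.padicNorm_p_of_prime]
      push_cast
      rw [← zpow_neg_one, ← zpow_add₀ (by positivity)]
      ring_nf
  have h2 : padicNorm p ((j : ℚ)) = (p : ℚ) ^ (-(padicValNat p j : ℤ)) := by
    simp [padicNorm, hjq, padicValRat.of_nat]
  rw [h1 j, h2, ← zpow_sub₀ (by positivity)]
  ring_nf

lemma norm_pow_div_le (p : ℕ) [hp : Fact p.Prime] (j : ℕ) (hj : 2 ≤ j) :
    padicNorm p ((p : ℚ) ^ j / j) ≤ ((p : ℚ))⁻¹ := by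
  rw [padicNorm_pow_div p j (by omega), ← zpow_neg_one]
  have hv := padicValNat_le_sub_one p j hp.out.one_lt (by omega)
  apply zpow_le_zpow_right₀ (by exact_mod_cast hp.out.one_lt.le)
  omega

lemma norm_pow_div_le' (p : ℕ) [hp : Fact p.Prime] (j : ℕ) (hj : 3 ≤ j) :
    padicNorm p ((p : ℚ) ^ j / j) ≤ ((p : ℚ) ^ 2)⁻¹ := by
  rw [padicNorm_pow_div p j (by omega)]
  have : ((p:ℚ)^2)⁻¹ = (p:ℚ) ^ (-2 : ℤ) := by
    rw [zpow_neg]; norm_cast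
  rw [this]
  have hv := padicValNat_le_sub_two p j hp.out.one_lt hj
  apply zpow_le_zpow_right₀ (by exact_mod_cast hp.out.one_lt.le)
  omega

lemma norm_bernoulli_le (p : ℕ) [hp : Fact p.Prime] (m : ℕ) :
    padicNorm p (bernoulli m) ≤ p := by
  induction m using Nat.strong_induction_on with
  | _ m ih =>
  have hp1 : (1 : ℚ) < p := by exact_mod_cast hp.out.one_lt
  have hpq : (p : ℚ) ≠ 0 := by positivity
  have hmain : padicNorm p ((p : ℚ) * bernoulli m) ≤ 1 := by
    rw [bern_identity p m]
    refine le_trans padicNorm.sub (max_le ?_ ?_)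
    · have : (∑ k ∈ Finset.range p, (k : ℚ) ^ m) = ((∑ k ∈ Finset.range p, k ^ m : ℕ) : ℚ) := by
        push_cast; ring
      rw [this]
      exact padicNorm.of_nat _
    · rcases Nat.eq_zero_or_pos m with rfl | hm
      · simp
      refine padicNorm.sum_le ⟨0, Finset.mem_range.mpr hm⟩ ?_
      intro i hi
      rw [Finset.mem_range] at hi
      have hterm : (m.choose i : ℚ) * bernoulli i * (p : ℚ) ^ (m + 1 - i) / ((m + 1 - i : ℕ) : ℚ)
          = (m.choose i : ℚ) * bernoulli i * ((p : ℚ) ^ (m + 1 - i) / ((m + 1 - i : ℕ) : ℚ)) := by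
        ring
      rw [hterm, padicNorm.mul, padicNorm.mul]
      have h1 : padicNorm p ((m.choose i : ℚ)) ≤ 1 := padicNorm.of_nat _
      have h2 : padicNorm p (bernoulli i) ≤ p := ih i hi
      have h3 : padicNorm p ((p : ℚ) ^ (m + 1 - i) / ((m + 1 - i : ℕ) : ℚ)) ≤ (p : ℚ)⁻¹ :=
        norm_pow_div_le p _ (by omega)
      calc padicNorm p ((m.choose i : ℚ)) * padicNorm p (bernoulli i)
              * padicNorm p ((p : ℚ) ^ (m + 1 - i) / ((m + 1 - i : ℕ) : ℚ))
          ≤ 1 * (p : ℚ) * (p : ℚ)⁻¹ := by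
            gcongr <;> exact padicNorm.nonneg _
        _ = 1 := by field_simp
  rw [padicNorm.mul, padicNorm.padicNorm_p_of_prime] at hmain
  calc padicNorm p (bernoulli m) = (p : ℚ) * ((p : ℚ)⁻¹ * padicNorm p (bernoulli m)) := by
        field_simp
    _ ≤ (p : ℚ) * 1 := by gcongr
    _ = p := mul_one _

lemma bernoulli_odd_zero {i : ℕ} (h1 : Odd i) (h3 : 3 ≤ i) : bernoulli i = 0 := by
  rw [bernoulli_eq_bernoulli'_of_ne_one (by omega)]
  exact bernoulli'_eq_zero_of_odd h1 (by omega)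

lemma crux (p : ℕ) [hp : Fact p.Prime] (hp23 : p = 2 ∨ p = 3) (n : ℕ) (hn : 0 < n) :
    padicNorm p ((p : ℚ) * bernoulli (2 * n) + 1) < 1 := by
  have hp1 : (1 : ℚ) < p := by exact_mod_cast hp.out.one_lt
  have hpq : (p : ℚ) ≠ 0 := by positivity
  set m := 2 * n with hm
  have hm1 : 0 < m := by omega
  have heq : (p : ℚ) * bernoulli m + 1 = ((∑ k ∈ Finset.range p, (k : ℚ) ^ m) + 1)
      - ∑ i ∈ Finset.range m, (m.choose i : ℚ) * bernoulli i * (p : ℚ) ^ (m + 1 - i)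
          / ((m + 1 - i : ℕ) : ℚ) := by
    rw [bern_identity p m]; ring
  rw [heq]
  refine lt_of_le_of_lt padicNorm.sub (max_lt ?_ ?_)
  · have hc : (∑ k ∈ Finset.range p, (k : ℚ) ^ m) + 1
        = (((∑ k ∈ Finset.range p, k ^ m) + 1 : ℕ) : ℚ) := by push_cast; ring
    rw [hc, padicNorm.nat_lt_one_iff]
    rcases hp23 with rfl | rfl
    · have : ∑ k ∈ Finset.range 2, k ^ m = 1 := by
        simp [Finset.sum_range_succ, Nat.zero_pow hm1]
      omega
    · have hsum : ∑ k ∈ Finset.range 3, k ^ m = 1 + 2 ^ m := by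
        simp [Finset.sum_range_succ, Nat.zero_pow hm1]
      have hmod : 2 ^ m % 3 = 1 := by
        have h4 : (4 : ℕ) ^ n ≡ 1 ^ n [MOD 3] := Nat.ModEq.pow n (by decide)
        have : 2 ^ m = 4 ^ n := by rw [hm, pow_mul]; norm_num
        simpa [this, Nat.ModEq] using h4
      omega
  · refine padicNorm.sum_lt' ?_ one_pos
    intro i hi
    rw [Finset.mem_range] at hi
    by_cases hij : i + 2 ≤ m
    · -- j = m + 1 - i ≥ 3
      have hterm : (m.choose i : ℚ) * bernoulli i * (p : ℚ) ^ (m + 1 - i) / ((m + 1 - i : ℕ) : ℚ)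
          = (m.choose i : ℚ) * bernoulli i * ((p : ℚ) ^ (m + 1 - i) / ((m + 1 - i : ℕ) : ℚ)) := by
        ring
      rw [hterm, padicNorm.mul, padicNorm.mul]
      have h1 : padicNorm p ((m.choose i : ℚ)) ≤ 1 := padicNorm.of_nat _
      have h2 : padicNorm p (bernoulli i) ≤ p := norm_bernoulli_le p i
      have h3 : padicNorm p ((p : ℚ) ^ (m + 1 - i) / ((m + 1 - i : ℕ) : ℚ)) ≤ ((p : ℚ) ^ 2)⁻¹ :=
        norm_pow_div_le' p _ (by omega)
      calc padicNorm p ((m.choose i : ℚ)) * padicNorm p (bernoulli i)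
              * padicNorm p ((p : ℚ) ^ (m + 1 - i) / ((m + 1 - i : ℕ) : ℚ))
          ≤ 1 * (p : ℚ) * ((p : ℚ) ^ 2)⁻¹ := by
            gcongr <;> exact padicNorm.nonneg _
        _ = (p : ℚ)⁻¹ := by field_simp
        _ < 1 := by
            rw [inv_lt_one_iff₀]; right; exact hp1
    · -- i = m - 1, which is odd since m is even
      have him : i = m - 1 := by omega
      have hiodd : Odd i := ⟨n - 1, by omega⟩
      rcases Nat.lt_or_ge i 3 with hi3 | hi3
      · -- i = 1, m = 2
        have hi1 : i = 1 := by
          rcases hiodd with ⟨k, hk⟩; omega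
        have hm2 : m = 2 := by omega
        rw [hi1, hm2]
        have hval : ((2:ℕ).choose 1 : ℚ) * bernoulli 1 * (p : ℚ) ^ (2 + 1 - 1) / ((2 + 1 - 1 : ℕ) : ℚ)
            = -((p : ℚ) * (p : ℚ) / 2) := by
          norm_num [bernoulli_one]; ring
        rw [hval]
        rcases hp23 with rfl | rfl
        · have h2 : -(((2:ℕ):ℚ) * ((2:ℕ):ℚ) / 2) = -(((2:ℕ)):ℚ) := by push_cast; ring
          rw [h2, padicNorm.neg]
          exact padicNorm.padicNorm_p_lt_one (by norm_num)
        · have hnorm2 : padicNorm 3 (2 : ℚ) = 1 := by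
            rw [show (2:ℚ) = ((2:ℕ):ℚ) by norm_num]
            exact (padicNorm.nat_eq_one_iff 2).mpr (by norm_num)
          rw [padicNorm.neg, padicNorm.div, padicNorm.mul,
            padicNorm.padicNorm_p_of_prime, hnorm2]
          norm_num
      · rw [bernoulli_odd_zero hiodd hi3]
        simpa using one_pos

lemma dvd_den_of_one_lt_padicNorm (p : ℕ) [hp : Fact p.Prime] {q : ℚ}
    (h : 1 < padicNorm p q) : p ∣ q.den := by
  by_contra hnd
  have hq : q ≠ 0 := by
    rintro rfl
    rw [padicNorm.zero] at h
    linarith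
  have hv : padicValNat p q.den = 0 := padicValNat.eq_zero_of_not_dvd hnd
  have hval : 0 ≤ padicValRat p q := by
    rw [padicValRat, hv]
    simp only [Nat.cast_zero, sub_zero]
    exact_mod_cast Nat.zero_le _
  have hle : padicNorm p q ≤ 1 := by
    simp only [padicNorm, if_neg hq]
    apply zpow_le_one_of_nonpos₀
    · exact_mod_cast hp.out.one_lt.le
    · omega
  linarith

lemma prime_dvd_bernoulli_den (p : ℕ) [hp : Fact p.Prime] (hp23 : p = 2 ∨ p = 3)
    (n : ℕ) (hn : 0 < n) : p ∣ (bernoulli (2 * n)).den := by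
  have hp1 : (1 : ℚ) < p := by exact_mod_cast hp.out.one_lt
  have hpq : (p : ℚ) ≠ 0 := by positivity
  apply dvd_den_of_one_lt_padicNorm p
  have hcrux := crux p hp23 n hn
  have hne : padicNorm p ((p : ℚ) * bernoulli (2 * n) + 1) ≠ padicNorm p (-1 : ℚ) := by
    rw [padicNorm.neg, padicNorm.one]
    exact hcrux.ne
  have hmax := padicNorm.add_eq_max_of_ne (p := p) hne
  have hsimp : (p : ℚ) * bernoulli (2 * n) + 1 + -1 = (p : ℚ) * bernoulli (2 * n) := by ring
  rw [hsimp, padicNorm.neg, padicNorm.one, max_eq_right hcrux.le] at hmax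
  rw [padicNorm.mul, padicNorm.padicNorm_p_of_prime] at hmax
  have : padicNorm p (bernoulli (2 * n)) = p := by
    field_simp at hmax
    linarith [hmax]
  rw [this]
  exact hp1

theorem six_dvd_bernoulli_denominator (n : ℕ) (hn : 0 < n) :
    6 ∣ (bernoulli (2 * n)).den := by
  haveI h2 : Fact (Nat.Prime 2) := ⟨by norm_num⟩
  haveI h3 : Fact (Nat.Prime 3) := ⟨by norm_num⟩
  have hd2 : 2 ∣ (bernoulli (2 * n)).den := prime_dvd_bernoulli_den 2 (Or.inl rfl) n hn
  have hd3 : 3 ∣ (bernoulli (2 * n)).den := prime_dvd_bernoulli_den 3 (Or.inr rfl) n hn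
  have : (6 : ℕ) = 2 * 3 := by norm_num
  rw [this]
  exact Nat.Coprime.mul_dvd_of_dvd_of_dvd (by norm_num) hd2 hd3
end

section
/- The generalized continued fraction π = 4/(1 + 1²/(2 + 3²/(2 + 5²/(2 + ···)))) holds: the sequence of convergents of the continued fraction with partial numerators a₁ = 1², a₂ = 3², a₃ = 5², …, a_k = (2k−1)², leading term 0, first partial denominator 1 and all subsequent partial denominators equal to 2, applied as x_k = 4/c_k where c_k is the k-th convergent, converges to π; equivalently, the convergents of the continued fraction 1 + K_{k≥1}((2k−1)²/2) converge to 4/π. -/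
open Real Filter

/-- Numerators `A_k` (shifted: `cfPiNum (k+1) = A_k`, `cfPiNum 0 = A_{-1} = 1`)
for the continued fraction `1 + K_{k≥1}((2k-1)²/2)`, i.e. with leading term
`b₀ = 1`, partial denominators `b_k = 2` and partial numerators
`a_k = (2k-1)²` for `k ≥ 1`. -/
noncomputable def cfPiNum : ℕ → ℝ
  | 0 => 1
  | 1 => 1
  | (k + 2) => 2 * cfPiNum (k + 1) + (2 * (k + 1) - 1 : ℝ) ^ 2 * cfPiNum k

/-- Denominators `B_k` (shifted: `cfPiDen (k+1) = B_k`, `cfPiDen 0 = B_{-1} = 0`). -/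
noncomputable def cfPiDen : ℕ → ℝ
  | 0 => 0
  | 1 => 1
  | (k + 2) => 2 * cfPiDen (k + 1) + (2 * (k + 1) - 1 : ℝ) ^ 2 * cfPiDen k

noncomputable def leibS (k : ℕ) : ℝ := ∑ i ∈ Finset.range (k + 1), (-1 : ℝ) ^ i / (2 * i + 1)

lemma cfPiNum_succ : ∀ k : ℕ, cfPiNum (k + 2) = (2 * k + 3) * cfPiNum (k + 1) := by
  intro k
  induction k with
  | zero => simp [cfPiNum]; ring
  | succ n ih =>
    show cfPiNum (n + 3) = _
    have h : cfPiNum (n + 3) = 2 * cfPiNum (n + 2) + (2 * (n + 2) - 1 : ℝ) ^ 2 * cfPiNum (n+1) := by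
      rw [cfPiNum]; push_cast; ring_nf
    rw [h, ih]
    push_cast
    ring

lemma cfPiNum_pos : ∀ k : ℕ, 0 < cfPiNum (k + 1) := by
  intro k
  induction k with
  | zero => norm_num [cfPiNum]
  | succ n ih =>
    rw [cfPiNum_succ]
    positivity

lemma leibS_succ (k : ℕ) : leibS (k + 1) = leibS k + (-1 : ℝ) ^ (k+1) / (2 * (k+1) + 1) := by
  simp [leibS, Finset.sum_range_succ]

lemma cfPiDen_eq : ∀ k : ℕ, cfPiDen (k + 1) = cfPiNum (k + 1) * leibS k ∧
    cfPiDen (k + 2) = cfPiNum (k + 2) * leibS (k + 1) := by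
  intro k
  induction k with
  | zero =>
    norm_num [cfPiDen, cfPiNum, leibS, Finset.sum_range_succ]
  | succ n ih =>
    obtain ⟨h1, h2⟩ := ih
    refine ⟨h2, ?_⟩
    show cfPiDen (n + 3) = cfPiNum (n + 3) * leibS (n + 2)
    have hd : cfPiDen (n + 3) = 2 * cfPiDen (n + 2) + (2 * (n + 2) - 1 : ℝ) ^ 2 * cfPiDen (n+1) := by
      rw [cfPiDen]; push_cast; ring_nf
    have hn2 : cfPiNum (n + 3) = (2 * (n+1) + 3) * cfPiNum (n + 2) := by
      have := cfPiNum_succ (n + 1); push_cast at this ⊢; ring_nf at this ⊢; linarith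
    have hn1 : cfPiNum (n + 2) = (2 * n + 3) * cfPiNum (n + 1) := by
      have := cfPiNum_succ n; push_cast at this ⊢; ring_nf at this ⊢; linarith
    have hs2 : leibS (n + 2) = leibS (n + 1) + (-1 : ℝ) ^ (n+2) / (2 * ((n:ℝ)+2) + 1) := by
      have := leibS_succ (n+1); simp only [show n+1+1 = n+2 from rfl] at this; push_cast at this ⊢; ring_nf at this ⊢; linarith
    have hs1 : leibS (n + 1) = leibS n + (-1 : ℝ) ^ (n+1) / (2 * ((n:ℝ)+1) + 1) := by
      have := leibS_succ n; push_cast at this ⊢; ring_nf at this ⊢; linarith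
    rw [hd, h1, h2, hn2, hs2, hn1, hs1]
    have hne1 : (2 * (n:ℝ) + 3) ≠ 0 := by positivity
    have hne2 : (2 * ((n:ℝ)+2) + 1) ≠ 0 := by positivity
    field_simp
    push_cast
    ring_nf

/-- The convergents `c_k = A_k / B_k` of `1 + 1²/(2 + 3²/(2 + 5²/(2 + ⋯)))`
converge to `4/π`; equivalently `x_k = 4 / c_k` converges to `π`, so that
`π = 4/(1 + 1²/(2 + 3²/(2 + 5²/(2 + ⋯))))`. -/
theorem pi_continued_fraction_lord_brouncker :
    Tendsto (fun k : ℕ => cfPiNum (k + 1) / cfPiDen (k + 1)) atTop (nhds (4 / π)) ∧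
    Tendsto (fun k : ℕ => 4 / (cfPiNum (k + 1) / cfPiDen (k + 1))) atTop (nhds π) := by
  have hS : Tendsto leibS atTop (nhds (π / 4)) := by
    have := Real.tendsto_sum_pi_div_four.comp (tendsto_add_atTop_nat 1)
    exact this
  have hkey : (fun k : ℕ => cfPiNum (k + 1) / cfPiDen (k + 1)) = fun k => 1 / leibS k := by
    funext k
    rw [(cfPiDen_eq k).1, div_mul_eq_div_div, div_self (cfPiNum_pos k).ne']
  have hpi4 : (π / 4 : ℝ) ≠ 0 := by positivity
  have h1 : Tendsto (fun k : ℕ => cfPiNum (k + 1) / cfPiDen (k + 1)) atTop (nhds (4 / π)) := by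
    rw [hkey]
    have : Tendsto (fun k : ℕ => 1 / leibS k) atTop (nhds (1 / (π / 4))) := Tendsto.div (tendsto_const_nhds (x := (1:ℝ))) hS hpi4
    convert this using 2
    rw [one_div, inv_div]
  refine ⟨h1, ?_⟩
  have h4pi : (4 / π : ℝ) ≠ 0 := by positivity
  have : Tendsto (fun k : ℕ => 4 / (cfPiNum (k + 1) / cfPiDen (k + 1))) atTop (nhds (4 / (4 / π))) := Tendsto.div (tendsto_const_nhds (x := (4:ℝ))) h1 h4pi
  convert this using 2
  rw [div_div_eq_mul_div]
  ring
end
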